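/- Consider the Matoušek USO m₂ of the 3-cube whose dimension influence graph has non-loop edges (1,3) and (2,3) only (two incomparable parents of one vertex). Then m₂ does not admit three vertex-disjoint directed paths from its unique source to its unique sink. -/

import Mathlib

open scoped symmDiff

/-- An orientation of the `3`-cube. -/
def IsOrientation (o : Finset (Fin 3) → Finset (Fin 3)) : Prop :=
  ∀ (v : Finset (Fin 3)) (d : Fin 3), d ∈ o v ↔ d ∉ o (v ∆ {d})

/-- A directed step along an outgoing edge of the cube orientation `o`. -/
def Step (o : Finset (Fin 3) → Finset (Fin 3)) (v w : Finset (Fin 3)) : Prop :=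
  ∃ d, d ∈ o v ∧ w = v ∆ {d}

/-- `s :: p` is a directed path from `s` to `t` in the orientation `o`. -/
def IsPathFrom (o : Finset (Fin 3) → Finset (Fin 3)) (s t : Finset (Fin 3))
    (p : List (Finset (Fin 3))) : Prop :=
  List.Chain (Step o) s p ∧ (s :: p).getLast (List.cons_ne_nil s p) = t

/-- Existence of three directed paths from `s` to `t`, pairwise vertex-disjoint
except at `s` and `t`. -/
def ThreeDisjointPaths (o : Finset (Fin 3) → Finset (Fin 3))
    (s t : Finset (Fin 3)) : Prop :=
  ∃ p₁ p₂ p₃ : List (Finset (Fin 3)),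
    IsPathFrom o s t p₁ ∧ IsPathFrom o s t p₂ ∧ IsPathFrom o s t p₃ ∧
    (∀ x, x ∈ s :: p₁ → x ∈ s :: p₂ → x = s ∨ x = t) ∧
    (∀ x, x ∈ s :: p₁ → x ∈ s :: p₃ → x = s ∨ x = t) ∧
    (∀ x, x ∈ s :: p₂ → x ∈ s :: p₃ → x = s ∨ x = t)

/-- The dimension influence graph with non-loop edges (1,3) and (2,3) only
(dimensions 1,2,3 are represented by 0,1,2 : Fin 3). -/
def E₂ (d d' : Fin 3) : Prop :=
  d = d' ∨ (d = 0 ∧ d' = 2) ∨ (d = 1 ∧ d' = 2)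


instance instDecE₂ (d d' : Fin 3) : Decidable (E₂ d d') := by unfold E₂; infer_instance

lemma stepval (m : Finset (Fin 3) → Finset (Fin 3))
    (hmat : ∀ (d d' : Fin 3) (v : Finset (Fin 3)),
      (Xor' (d' ∈ m v) (d' ∈ m (v ∆ {d})) ↔ E₂ d d'))
    {v A B : Finset (Fin 3)} (d : Fin 3) (hA : m v = A)
    (hB : ∀ d', Xor' (d' ∈ A) (d' ∈ B) ↔ E₂ d d') : m (v ∆ {d}) = B := by
  ext d'
  have h := hmat d d' v
  rw [hA] at h
  have h2 := hB d'
  simp [Xor', Xor] at h h2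
  tauto

/-- The Matoušek USO `m₂` of the 3-cube whose dimension influence graph has two
incomparable in-neighbours of one vertex admits no three vertex-disjoint directed
paths from its unique source to its unique sink. -/
theorem stmt11 (m : Finset (Fin 3) → Finset (Fin 3))
    (hor : IsOrientation m) (h0 : m ∅ = ∅)
    (hmat : ∀ (d d' : Fin 3) (v : Finset (Fin 3)),
      (Xor' (d' ∈ m v) (d' ∈ m (v ∆ {d})) ↔ E₂ d d')) :
    ∀ s t : Finset (Fin 3), m s = Finset.univ → m t = ∅ →
      ¬ ThreeDisjointPaths m s t := by
  -- the table of values of m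
  have t1 : m {0} = {0,2} := by
    have := stepval m hmat (B := {0,2}) 0 h0 (by delta Xor'; decide)
    rwa [show (∅:Finset (Fin 3)) ∆ {0} = {0} by decide] at this
  have t2 : m {1} = {1,2} := by
    have := stepval m hmat (B := {1,2}) 1 h0 (by delta Xor'; decide)
    rwa [show (∅:Finset (Fin 3)) ∆ {1} = {1} by decide] at this
  have t3 : m {2} = {2} := by
    have := stepval m hmat (B := {2}) 2 h0 (by delta Xor'; decide)
    rwa [show (∅:Finset (Fin 3)) ∆ {2} = {2} by decide] at this
  have t01 : m {0,1} = {0,1} := by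
    have := stepval m hmat (B := {0,1}) 1 t1 (by delta Xor'; decide)
    rwa [show ({0}:Finset (Fin 3)) ∆ {1} = {0,1} by decide] at this
  have t02 : m {0,2} = {0} := by
    have := stepval m hmat (B := {0}) 2 t1 (by delta Xor'; decide)
    rwa [show ({0}:Finset (Fin 3)) ∆ {2} = {0,2} by decide] at this
  have t12 : m {1,2} = {1} := by
    have := stepval m hmat (B := {1}) 2 t2 (by delta Xor'; decide)
    rwa [show ({1}:Finset (Fin 3)) ∆ {2} = {1,2} by decide] at this
  have tU : m Finset.univ = Finset.univ := by
    have := stepval m hmat (B := Finset.univ) 2 t01 (by delta Xor'; decide)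
    rwa [show ({0,1}:Finset (Fin 3)) ∆ {2} = Finset.univ by decide] at this
  have hall : ∀ v : Finset (Fin 3), v = ∅ ∨ v = {0} ∨ v = {1} ∨ v = {2} ∨
      v = {0,1} ∨ v = {0,2} ∨ v = {1,2} ∨ v = Finset.univ := by decide
  intro s t hs ht
  have hsu : s = Finset.univ := by
    rcases hall s with h|h|h|h|h|h|h|h <;> subst h <;>
      simp only [h0, t1, t2, t3, t01, t02, t12, tU] at hs <;>
      first
        | rfl
        | exact absurd hs (by decide)
  have htt : t = ∅ := by
    rcases hall t with h|h|h|h|h|h|h|h <;> subst h <;>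
      simp only [h0, t1, t2, t3, t01, t02, t12, tU] at ht <;>
      first
        | rfl
        | exact absurd ht (by decide)
  subst hsu htt
  -- the cut lemma
  have cut : ∀ p : List (Finset (Fin 3)), ∀ v : Finset (Fin 3),
      (v = Finset.univ ∨ v = {1,2} ∨ v = {0,2}) →
      List.Chain (Step m) v p → (v::p).getLast (List.cons_ne_nil v p) = ∅ →
      (({0,1}:Finset (Fin 3)) ∈ p ∨ ({2}:Finset (Fin 3)) ∈ p) := by
    intro p
    induction p with
    | nil =>
      intro v hv _ hl
      simp only [List.getLast_singleton] at hl
      subst hl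
      rcases hv with h|h|h <;> exact absurd h (by decide)
    | cons w rest ih =>
      intro v hv hc hl
      unfold List.Chain at hc
      rw [List.chain_cons] at hc
      obtain ⟨⟨d, hd, hw⟩, hc⟩ := hc
      have hl' : (w::rest).getLast (List.cons_ne_nil w rest) = ∅ := by
        rw [List.getLast_cons (List.cons_ne_nil w rest)] at hl
        exact hl
      rcases hv with h|h|h <;> subst h
      · rw [tU] at hd
        fin_cases d
        · have hw' : w = {1,2} := by rw [hw]; decide
          subst hw'
          rcases ih {1,2} (Or.inr (Or.inl rfl)) hc hl' with h|h
          · exact Or.inl (List.mem_cons_of_mem _ h)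
          · exact Or.inr (List.mem_cons_of_mem _ h)
        · have hw' : w = {0,2} := by rw [hw]; decide
          subst hw'
          rcases ih {0,2} (Or.inr (Or.inr rfl)) hc hl' with h|h
          · exact Or.inl (List.mem_cons_of_mem _ h)
          · exact Or.inr (List.mem_cons_of_mem _ h)
        · have hw' : w = {0,1} := by rw [hw]; decide
          subst hw'
          exact Or.inl List.mem_cons_self
      · rw [t12] at hd
        fin_cases d
        · exact absurd hd (by decide)
        · have hw' : w = {2} := by rw [hw]; decide
          subst hw'
          exact Or.inr List.mem_cons_self
        · exact absurd hd (by decide)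
      · rw [t02] at hd
        fin_cases d
        · have hw' : w = {2} := by rw [hw]; decide
          subst hw'
          exact Or.inr List.mem_cons_self
        · exact absurd hd (by decide)
        · exact absurd hd (by decide)
  rintro ⟨p₁, p₂, p₃, ⟨hc1, hl1⟩, ⟨hc2, hl2⟩, ⟨hc3, hl3⟩, d12, d13, d23⟩
  have m1 := cut p₁ Finset.univ (Or.inl rfl) hc1 hl1
  have m2 := cut p₂ Finset.univ (Or.inl rfl) hc2 hl2
  have m3 := cut p₃ Finset.univ (Or.inl rfl) hc3 hl3
  rcases m1 with h1|h1 <;> rcases m2 with h2|h2 <;> rcases m3 with h3|h3 <;>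
    first
      | exact absurd (d12 _ (List.mem_cons_of_mem _ h1) (List.mem_cons_of_mem _ h2)) (by decide)
      | exact absurd (d13 _ (List.mem_cons_of_mem _ h1) (List.mem_cons_of_mem _ h3)) (by decide)
      | exact absurd (d23 _ (List.mem_cons_of_mem _ h2) (List.mem_cons_of_mem _ h3)) (by decide)
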